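/- Let (μ_n) be a strictly increasing sequence of positive reals with counting function N(x) = #{n : μ_n ≤ x}. If 0 ≤ M^{-1/β} x^{1/β} + δ(x) − N(x) ≤ 1 for all x ≥ μ₁ where δ(x) = o(x^{(1−σ)/β}) with σ ∈ (0,1], β > 1, M > 0, then log ∏_{j≥1} (1 + μ_n/μ_j) = M^{-1/β} μ_n^{1/β} (ζ_{0,β} + o(1)) as n → ∞, where ζ_{0,β} = ∫₀^∞ dy/(y^{1−1/β}(1+y)). -/

import Mathlib

open Filter Asymptotics MeasureTheory Set Topology

lemma gInt {t y : ℝ} (ht : 0 < t) (hy : 0 < y) :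
    IntegrableOn (fun x => t / (x * (x + t))) (Ioi y) volume ∧
    (∫ x in Ioi y, t / (x * (x + t))) = Real.log (1 + t / y) := by
  set G : ℝ → ℝ := fun x => Real.log x - Real.log (x + t) with hG
  have hderiv : ∀ x ∈ Ici y, HasDerivAt G (t / (x * (x + t))) x := by
    intro x hx
    have hx0 : 0 < x := hy.trans_le hx
    have hxt : 0 < x + t := by linarith
    have h1 : HasDerivAt G (x⁻¹ - (x + t)⁻¹) x := by
      refine (Real.hasDerivAt_log hx0.ne').sub ?_
      have h := ((Real.hasDerivAt_log hxt.ne').comp x ((hasDerivAt_id x).add_const t))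
      simp only [mul_one] at h
      exact h
    convert h1 using 1
    field_simp
    ring
  have hpos : ∀ x ∈ Ioi y, 0 ≤ t / (x * (x + t)) := by
    intro x hx
    have hx0 : 0 < x := hy.trans hx
    have : 0 < x * (x + t) := mul_pos hx0 (by linarith)
    positivity
  have htend : Tendsto G atTop (𝓝 0) := by
    have h2 : Tendsto (fun x : ℝ => 1 + t / x) atTop (𝓝 1) := by
      simpa using tendsto_const_nhds.add (Tendsto.div_atTop (tendsto_const_nhds (x := t)) tendsto_id)
    have h3 : Tendsto (fun x : ℝ => -Real.log (1 + t / x)) atTop (𝓝 0) := by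
      have := ((Real.continuousAt_log one_ne_zero).tendsto.comp h2).neg
      simpa using this
    refine Tendsto.congr' ?_ h3
    filter_upwards [eventually_gt_atTop (0:ℝ)] with x hx
    have hxt : 0 < x + t := by linarith
    rw [hG]
    have : 1 + t / x = (x + t) / x := by field_simp
    rw [this, Real.log_div hxt.ne' hx.ne']
    ring
  refine ⟨integrableOn_Ioi_deriv_of_nonneg' hderiv hpos htend, ?_⟩
  rw [integral_Ioi_of_hasDerivAt_of_nonneg' hderiv hpos htend]
  have hyt : 0 < y + t := by linarith
  have : 1 + t / y = (y + t) / y := by field_simp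
  rw [this, Real.log_div hyt.ne' hy.ne', hG]
  ring

lemma mMeas {p t : ℝ} : Measurable (fun x : ℝ => x ^ (p - 1) * (t / (x + t))) := by
  exact (measurable_id.pow_const _).mul (measurable_const.div ((measurable_id.add_const t)))

lemma mInt {p t : ℝ} (hp0 : 0 < p) (hp1 : p < 1) (ht : 0 < t) :
    IntegrableOn (fun x : ℝ => x ^ (p - 1) * (t / (x + t))) (Ioi (0:ℝ)) volume := by
  have hmeas : Measurable (fun x : ℝ => x ^ (p - 1) * (t / (x + t))) := mMeas
  have h1 : IntegrableOn (fun x : ℝ => x ^ (p - 1) * (t / (x + t))) (Ioc (0:ℝ) 1) volume := by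
    have hbase : IntegrableOn (fun x : ℝ => x ^ (p - 1)) (Ioc (0:ℝ) 1) volume := by
      rw [integrableOn_Ioc_iff_integrableOn_Ioo]
      exact (intervalIntegral.integrableOn_Ioo_rpow_iff zero_lt_one).2 (by linarith)
    refine Integrable.mono hbase hmeas.aestronglyMeasurable ?_
    rw [ae_restrict_iff' measurableSet_Ioc]
    filter_upwards with x hx
    have hx0 : 0 < x := hx.1
    have hxt : 0 < x + t := by linarith
    have hfrac : t / (x + t) ≤ 1 := by
      rw [div_le_one hxt]; linarith
    have hnn : 0 ≤ x ^ (p - 1) * (t / (x + t)) := by positivity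
    rw [Real.norm_eq_abs, Real.norm_eq_abs, abs_of_nonneg hnn,
      abs_of_nonneg (by positivity : (0:ℝ) ≤ x ^ (p - 1))]
    calc x ^ (p - 1) * (t / (x + t)) ≤ x ^ (p - 1) * 1 := by
          exact mul_le_mul_of_nonneg_left hfrac (by positivity)
      _ = x ^ (p - 1) := mul_one _
  have h2 : IntegrableOn (fun x : ℝ => x ^ (p - 1) * (t / (x + t))) (Ioi (1:ℝ)) volume := by
    have hbase : IntegrableOn (fun x : ℝ => t * x ^ (p - 2)) (Ioi (1:ℝ)) volume :=
      (integrableOn_Ioi_rpow_of_lt (by linarith) zero_lt_one).const_mul t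
    refine Integrable.mono hbase hmeas.aestronglyMeasurable ?_
    rw [ae_restrict_iff' measurableSet_Ioi]
    filter_upwards with x hx
    have hx0 : (0:ℝ) < x := lt_trans zero_lt_one hx
    have hxt : 0 < x + t := by linarith
    have hnn : 0 ≤ x ^ (p - 1) * (t / (x + t)) := by positivity
    rw [Real.norm_eq_abs, Real.norm_eq_abs, abs_of_nonneg hnn,
      abs_of_nonneg (by positivity : (0:ℝ) ≤ t * x ^ (p - 2))]
    have hfrac : t / (x + t) ≤ t / x := by
      exact div_le_div_of_nonneg_left ht.le hx0 (by linarith)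
    calc x ^ (p - 1) * (t / (x + t)) ≤ x ^ (p - 1) * (t / x) :=
          mul_le_mul_of_nonneg_left hfrac (by positivity)
      _ = t * x ^ (p - 2) := by
          have h2 : x ^ (p - 2) = x ^ (p - 1) / x := by
            rw [show p - 2 = (p - 1) - 1 by ring, Real.rpow_sub_one hx0.ne']
          rw [h2]; ring
  have := h1.union h2
  rwa [Ioc_union_Ioi_eq_Ioi zero_le_one] at this

lemma mSubst {p t : ℝ} (hp0 : 0 < p) (ht : 0 < t) :
    (∫ x in Ioi (0:ℝ), x ^ (p - 1) * (t / (x + t))) =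
      t ^ p * ∫ y in Ioi (0:ℝ), y ^ (p - 1) / (1 + y) := by
  have key0 := integral_comp_mul_left_Ioi (fun x : ℝ => x ^ (p - 1) * (t / (x + t))) 0 ht
  rw [mul_zero] at key0
  have key : (∫ x in Ioi (0:ℝ), (t * x) ^ (p - 1) * (t / (t * x + t))) =
      t⁻¹ • ∫ x in Ioi (0:ℝ), x ^ (p - 1) * (t / (x + t)) := key0
  have e1 : (∫ x in Ioi (0:ℝ), (t * x) ^ (p - 1) * (t / (t * x + t))) =
      ∫ x in Ioi (0:ℝ), t ^ (p - 1) * (x ^ (p - 1) / (1 + x)) := by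
    refine setIntegral_congr_fun measurableSet_Ioi fun x hx => ?_
    have hx0 : (0:ℝ) < x := hx
    have h1x : (0:ℝ) < 1 + x := by linarith
    rw [Real.mul_rpow ht.le hx0.le]
    have : t * x + t = t * (1 + x) := by ring
    rw [this, div_mul_eq_div_div, div_self ht.ne']
    ring
  rw [e1] at key
  rw [integral_const_mul] at key
  have h3 : (∫ x in Ioi (0:ℝ), x ^ (p - 1) * (t / (x + t))) =
      t * (t ^ (p - 1) * ∫ y in Ioi (0:ℝ), y ^ (p - 1) / (1 + y)) := by
    calc (∫ x in Ioi (0:ℝ), x ^ (p - 1) * (t / (x + t)))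
        = t * (t⁻¹ • ∫ x in Ioi (0:ℝ), x ^ (p - 1) * (t / (x + t))) := by
          rw [smul_eq_mul, ← mul_assoc, mul_inv_cancel₀ ht.ne', one_mul]
      _ = t * (t ^ (p - 1) * ∫ y in Ioi (0:ℝ), y ^ (p - 1) / (1 + y)) := by rw [← key]
  rw [h3, ← mul_assoc]
  congr 1
  have h4 : t ^ p = t ^ (1:ℝ) * t ^ (p - 1) := by
    rw [← Real.rpow_add ht]; ring_nf
  rw [h4, Real.rpow_one]


lemma rep (μ : ℕ → ℝ) (hpos : ∀ n, 0 < μ n)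
    (hfin : ∀ x : ℝ, {n : ℕ | μ n ≤ x}.Finite)
    (Ncount : ℝ → ℝ) (hNcount : ∀ x : ℝ, Ncount x = (Nat.card {n : ℕ | μ n ≤ x} : ℝ))
    {t : ℝ} (ht : 0 < t) (hsum : Summable (fun j => Real.log (1 + t / μ j))) :
    (∑' j : ℕ, Real.log (1 + t / μ j)) =
      ∫ x in Ioi (0:ℝ), Ncount x * (t / (x * (x + t))) := by
  classical
  set F : ℕ → ℝ → ℝ := fun j => (Ici (μ j)).indicator (fun x => t / (x * (x + t))) with hF
  have hsub : ∀ j, Ici (μ j) ∩ Ioi (0:ℝ) = Ici (μ j) := by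
    intro j
    refine inter_eq_left.2 fun x hx => lt_of_lt_of_le (hpos j) hx
  have hFint : ∀ j, Integrable (F j) (volume.restrict (Ioi (0:ℝ))) := by
    intro j
    rw [hF, integrable_indicator_iff measurableSet_Ici, IntegrableOn,
      Measure.restrict_restrict measurableSet_Ici, hsub]
    rw [← IntegrableOn, integrableOn_Ici_iff_integrableOn_Ioi]
    exact (gInt ht (hpos j)).1
  have hFval : ∀ j, (∫ x in Ioi (0:ℝ), F j x) = Real.log (1 + t / μ j) := by
    intro j
    rw [hF]
    rw [integral_indicator measurableSet_Ici,
      Measure.restrict_restrict measurableSet_Ici, hsub, integral_Ici_eq_integral_Ioi]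
    exact (gInt ht (hpos j)).2
  have hFnonneg : ∀ j x, 0 ≤ F j x := by
    intro j x
    refine indicator_nonneg (fun y hy => ?_) x
    have hy0 : 0 < y := lt_of_lt_of_le (hpos j) hy
    have : 0 < y * (y + t) := mul_pos hy0 (by linarith)
    positivity
  have hFnorm : ∀ j, (∫ x in Ioi (0:ℝ), ‖F j x‖) = Real.log (1 + t / μ j) := by
    intro j
    rw [← hFval j]
    refine integral_congr_ae (Filter.Eventually.of_forall fun x => ?_)
    exact Real.norm_of_nonneg (hFnonneg j x)
  have hsummnorm : Summable fun j => ∫ x in Ioi (0:ℝ), ‖F j x‖ := by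
    refine hsum.congr fun j => (hFnorm j).symm
  have hHS := hasSum_integral_of_summable_integral_norm hFint hsummnorm
  have hts : ∀ x : ℝ, (∑' j, F j x) = Ncount x * (t / (x * (x + t))) := by
    intro x
    have hfx := hfin x
    rw [tsum_eq_sum (s := hfx.toFinset)
      (fun j hj => indicator_of_notMem (by simpa using (fun h => hj ((hfx.mem_toFinset).2 h))) _)]
    have heq : ∀ j ∈ hfx.toFinset, F j x = t / (x * (x + t)) := by
      intro j hj
      exact indicator_of_mem (by simpa using (hfx.mem_toFinset).1 hj) _
    rw [Finset.sum_congr rfl heq, Finset.sum_const, nsmul_eq_mul]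
    congr 1
    rw [hNcount, Nat.card_coe_set_eq, Set.ncard_eq_toFinset_card _ hfx]
  have : (∑' j, Real.log (1 + t / μ j)) = ∑' j, ∫ x in Ioi (0:ℝ), F j x :=
    tsum_congr fun j => (hFval j).symm
  rw [this, hHS.tsum_eq]
  exact integral_congr_ae (Filter.Eventually.of_forall fun x => hts x)

lemma loc {f : ℝ → ℝ} {a : ℝ} (ha : 0 < a) (h0 : ∀ x, 0 < x → x < a → f x = 0) :
    (∫ x in Ioi (0:ℝ), f x) = ∫ x in Ioi a, f x := by
  have hsub : Ioi a ∩ Ioi (0:ℝ) = Ioi a :=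
    inter_eq_left.2 fun x hx => lt_trans ha hx
  have h_ne : ∀ᵐ (x:ℝ) ∂(volume.restrict (Ioi (0:ℝ))), x ≠ a := by
    refine ae_restrict_of_ae ?_
    rw [ae_iff]
    simp only [ne_eq, not_not, setOf_eq_eq_singleton]
    exact measure_singleton a
  have h1 : (∫ x in Ioi (0:ℝ), f x) = ∫ x in Ioi (0:ℝ), (Ioi a).indicator f x := by
    refine integral_congr_ae ?_
    filter_upwards [h_ne, ae_restrict_mem measurableSet_Ioi] with x hxa hx0
    by_cases hxA : a < x
    · simp [Set.indicator_apply, mem_Ioi, hxA]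
    · simp [Set.indicator_apply, mem_Ioi, hxA, h0 x hx0 (lt_of_le_of_ne (not_lt.1 hxA) hxa)]
  rw [h1, integral_indicator measurableSet_Ioi,
    Measure.restrict_restrict measurableSet_Ioi, hsub]


set_option maxHeartbeats 2000000 in
theorem log_product_asymptotics
    (μ : ℕ → ℝ) (hpos : ∀ n, 0 < μ n) (hmono : StrictMono μ)
    (M β σ : ℝ) (hM : 0 < M) (hβ : 1 < β) (hσ : σ ∈ Set.Ioc (0 : ℝ) 1)
    (Ncount : ℝ → ℝ) (hNcount : ∀ x : ℝ, Ncount x = (Nat.card {n : ℕ | μ n ≤ x} : ℝ))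
    (δ : ℝ → ℝ) (hδ : δ =o[atTop] fun x : ℝ => x ^ ((1 - σ) / β))
    (hsandwich : ∀ x : ℝ, μ 0 ≤ x →
      0 ≤ M ^ (-(1 / β)) * x ^ (1 / β) + δ x - Ncount x ∧
      M ^ (-(1 / β)) * x ^ (1 / β) + δ x - Ncount x ≤ 1) :
    (fun n : ℕ => Real.log (∏' j : ℕ, (1 + μ n / μ j)) -
        M ^ (-(1 / β)) * (μ n) ^ (1 / β) *
          ∫ y in Set.Ioi (0 : ℝ), 1 / (y ^ (1 - 1 / β) * (1 + y)))
      =o[atTop] fun n : ℕ => (μ n) ^ (1 / β) := by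
  obtain ⟨hσ0, hσ1⟩ := hσ
  have hβ0 : (0:ℝ) < β := by linarith
  set c := M ^ (-(1/β)) with hcdef
  set γ := 1/β with hγdef
  have hγ : 0 < γ := by positivity
  have hγ1 : γ < 1 := by rw [hγdef, div_lt_one hβ0]; linarith
  have hc : 0 < c := Real.rpow_pos_of_pos hM _
  set a := μ 0 with hadef
  have ha : 0 < a := hpos 0
  set τ := (1-σ)/β with hτdef
  set τ' := (1-σ/2)/β with hτ'def
  have hτ'0 : 0 < τ' := div_pos (by linarith) hβ0
  have hτ'γ : τ' < γ := by
    rw [hτ'def, hγdef, div_lt_div_iff₀ hβ0 hβ0]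
    nlinarith
  have hττ' : τ ≤ τ' := by
    rw [hτdef, hτ'def, div_le_div_iff₀ hβ0 hβ0]
    nlinarith
  have hτγ : τ < γ := lt_of_le_of_lt hττ' hτ'γ
  have hτ'1 : τ' < 1 := lt_trans hτ'γ hγ1
  -- eventual bound on |δ|
  obtain ⟨X₀, hX₀1, hX₀⟩ : ∃ X₀ : ℝ, 1 ≤ X₀ ∧ ∀ x ≥ X₀, |δ x| ≤ x ^ τ := by
    have hb := hδ.bound one_pos
    rw [eventually_atTop] at hb
    obtain ⟨X, hX⟩ := hb
    refine ⟨max X 1, le_max_right _ _, fun x hx => ?_⟩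
    have h1 : (1:ℝ) ≤ x := le_trans (le_max_right X 1) hx
    have := hX x (le_trans (le_max_left X 1) hx)
    rwa [one_mul, Real.norm_eq_abs, Real.norm_eq_abs,
      abs_of_nonneg (Real.rpow_nonneg (by linarith) _)] at this
  -- μ tends to infinity
  have hμtop : Tendsto μ atTop atTop := by
    by_contra hcon
    have hbdd : ∃ b : ℝ, ∀ n, μ n ≤ b := by
      rw [tendsto_atTop_atTop] at hcon
      push_neg at hcon
      obtain ⟨b, hbb⟩ := hcon
      refine ⟨b, fun n => ?_⟩
      obtain ⟨m, hm, hmb⟩ := hbb n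
      exact le_of_lt (lt_of_le_of_lt (hmono.monotone hm) hmb)
    obtain ⟨b, hb⟩ := hbdd
    have hNzero : ∀ x, max b a ≤ x → Ncount x = 0 := by
      intro x hx
      have huniv : {n : ℕ | μ n ≤ x} = Set.univ :=
        eq_univ_of_forall fun n => le_trans (hb n) (le_trans (le_max_left _ _) hx)
      rw [hNcount, huniv]
      have : (Set.univ : Set ℕ).Infinite := infinite_univ
      have := this.to_subtype
      rw [Nat.card_eq_zero_of_infinite]
      simp
    have hev1 : ∀ᶠ x : ℝ in atTop, c * x ^ γ + δ x ≤ 1 := by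
      filter_upwards [eventually_ge_atTop (max b a)] with x hx
      have hax : a ≤ x := le_trans (le_max_right b a) hx
      have := (hsandwich x hax).2
      rw [hNzero x hx] at this
      linarith
    have hsmall : ∀ᶠ x : ℝ in atTop, x ^ τ ≤ c/2 * x ^ γ := by
      have ht0 : Tendsto (fun x : ℝ => x ^ (τ - γ)) atTop (𝓝 0) := by
        have := tendsto_rpow_neg_atTop (by linarith : 0 < γ - τ)
        simpa [neg_sub] using this
      filter_upwards [ht0.eventually_lt_const (half_pos hc), eventually_gt_atTop (0:ℝ)]
        with x hlt hx0
      have : x ^ τ = x ^ (τ - γ) * x ^ γ := by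
        rw [← Real.rpow_add hx0]; ring_nf
      rw [this]
      exact mul_le_mul_of_nonneg_right hlt.le (Real.rpow_nonneg hx0.le _)
    have htt : Tendsto (fun x : ℝ => c * x ^ γ + δ x) atTop atTop := by
      refine tendsto_atTop_mono' atTop ?_
        ((tendsto_rpow_atTop hγ).const_mul_atTop (half_pos hc))
      filter_upwards [hsmall, eventually_ge_atTop X₀, eventually_gt_atTop (0:ℝ)]
        with x hsm hX hx0
      have habs := hX₀ x hX
      have : -(x ^ τ) ≤ δ x := by
        have := neg_abs_le (δ x); linarith
      have hxγ : c/2 * x ^ γ + c/2 * x ^ γ = c * x ^ γ := by ring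
      linarith
    obtain ⟨x, hx1, hx2⟩ := ((htt.eventually_gt_atTop 1).and hev1).exists
    linarith
  -- finiteness of counting sets
  have hfin : ∀ x : ℝ, {n : ℕ | μ n ≤ x}.Finite := by
    intro x
    obtain ⟨N, hN⟩ := (tendsto_atTop_atTop.1 hμtop) (x+1)
    refine Set.Finite.subset (Set.finite_Iio N) fun n hn => ?_
    by_contra h
    have := hN n (not_lt.1 h)
    have hnx : μ n ≤ x := hn
    linarith
  have hNmono : Monotone Ncount := by
    intro x y hxy
    rw [hNcount, hNcount]
    exact_mod_cast Nat.card_mono (hfin y) (fun n hn => le_trans hn hxy)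
  have hNnonneg : ∀ x, 0 ≤ Ncount x := fun x => by rw [hNcount]; positivity
  have hNmeas : Measurable Ncount := hNmono.measurable
  have hNj : ∀ j : ℕ, Ncount (μ j) = (j:ℝ) + 1 := by
    intro j
    have hset : {n : ℕ | μ n ≤ μ j} = Set.Iic j := by
      ext n; simpa using hmono.le_iff_le
    rw [hNcount, hset, ← Finset.coe_Iic, Nat.card_coe_set_eq, Set.ncard_coe_finset,
      Nat.card_Iic]
    push_cast; ring
  -- summability of 1/μ
  have hμinv : Summable fun j => (μ j)⁻¹ := by
    have hbase : Summable fun j : ℕ => ((j:ℝ)+1) ^ (-β) := by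
      have h0 : Summable (fun n : ℕ => 1/(n:ℝ) ^ β) := Real.summable_one_div_nat_rpow.2 hβ
      have h1 := (summable_nat_add_iff 1).2 h0
      refine h1.congr fun n => ?_
      rw [Real.rpow_neg (by positivity)]
      push_cast
      rw [one_div]
    have hev : ∀ᶠ j in atTop, (μ j)⁻¹ ≤ (c+1) ^ β * ((j:ℝ)+1) ^ (-β) := by
      filter_upwards [hμtop.eventually_ge_atTop (max X₀ 1), hμtop.eventually_ge_atTop a]
        with j hj hja
      have hμ1 : 1 ≤ μ j := le_trans (le_max_right _ _) hj
      have hμX : X₀ ≤ μ j := le_trans (le_max_left _ _) hj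
      have hμ0 : 0 < μ j := hpos j
      have h1 : (j:ℝ) + 1 ≤ (c+1) * (μ j) ^ γ := by
        have hN := (hsandwich (μ j) hja).1
        rw [hNj j] at hN
        have hδb := hX₀ (μ j) hμX
        have hττ2 : (μ j) ^ τ ≤ (μ j) ^ γ :=
          Real.rpow_le_rpow_of_exponent_le hμ1 hτγ.le
        have habs : δ (μ j) ≤ (μ j) ^ τ := le_trans (le_abs_self _) hδb
        nlinarith [Real.rpow_nonneg hμ0.le γ]
      have h2 : ((j:ℝ)+1)/(c+1) ≤ (μ j) ^ γ := by
        rw [div_le_iff₀ (by linarith)]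
        nlinarith [Real.rpow_nonneg hμ0.le γ]
      have h3 : (((j:ℝ)+1)/(c+1)) ^ β ≤ μ j := by
        calc (((j:ℝ)+1)/(c+1)) ^ β ≤ ((μ j) ^ γ) ^ β :=
              Real.rpow_le_rpow (by positivity) h2 hβ0.le
          _ = μ j := by
              rw [← Real.rpow_mul hμ0.le, hγdef, one_div, inv_mul_cancel₀ hβ0.ne',
                Real.rpow_one]
      have h4 : (μ j)⁻¹ ≤ ((((j:ℝ)+1)/(c+1)) ^ β)⁻¹ := by
        have hp : (0:ℝ) < (((j:ℝ)+1)/(c+1)) ^ β := Real.rpow_pos_of_pos (by positivity) _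
        exact inv_anti₀ hp h3
      refine le_trans h4 (le_of_eq ?_)
      rw [Real.div_rpow (by positivity) (by positivity), Real.rpow_neg (by positivity)]
      field_simp
    rw [eventually_atTop] at hev
    obtain ⟨k, hk⟩ := hev
    rw [← summable_nat_add_iff k]
    refine Summable.of_nonneg_of_le (fun j => inv_nonneg.2 (hpos _).le) (fun j => ?_)
      ((hbase.mul_left ((c+1) ^ β)).comp_injective (add_left_injective k) |>.congr fun j => rfl)
    exact hk (j+k) (Nat.le_add_left k j)
  -- summability of logs
  have hlogsum : ∀ t : ℝ, 0 < t → Summable fun j => Real.log (1 + t / μ j) := by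
    intro t ht
    refine Summable.of_nonneg_of_le (fun j => Real.log_nonneg ?_) (fun j => ?_)
      (hμinv.mul_left t)
    · have : 0 ≤ t / μ j := le_of_lt (div_pos ht (hpos j))
      linarith
    · have hx : 0 < 1 + t / μ j := by
        have : 0 < t / μ j := div_pos ht (hpos j)
        linarith
      have h := Real.log_le_sub_one_of_pos hx
      calc Real.log (1 + t / μ j) ≤ (1 + t / μ j) - 1 := h
        _ = t * (μ j)⁻¹ := by rw [div_eq_mul_inv]; ring
  set S : ℝ → ℝ := fun t => ∑' j, Real.log (1 + t / μ j) with hSdef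
  -- log of product equals S
  have hlogprod : ∀ n, Real.log (∏' j, (1 + μ n / μ j)) = S (μ n) := by
    intro n
    have ht := hpos n
    have hp : ∀ (_ : Unit) (j : ℕ), 0 < 1 + μ n / μ j := fun _ j => by
      have : 0 < μ n / μ j := div_pos ht (hpos j)
      linarith
    have h2 := Real.rexp_tsum_eq_tprod (f := fun j => 1 + μ n / μ j) (hp ()) (hlogsum _ ht)
    rw [← h2, Real.log_exp, hSdef]
  -- representation of S as integral
  have hrep : ∀ t : ℝ, 0 < t →
      S t = ∫ x in Ioi a, Ncount x * (t / (x * (x + t))) := by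
    intro t ht
    have hr : S t = ∫ x in Ioi (0:ℝ), Ncount x * (t / (x * (x + t))) :=
      rep μ hpos hfin Ncount hNcount ht (hlogsum t ht)
    rw [hr]
    refine loc ha (fun x hx0 hxa => ?_)
    have hemp : {n : ℕ | μ n ≤ x} = ∅ := by
      refine eq_empty_of_forall_notMem fun n hn => ?_
      have h1 : a ≤ μ n := hmono.monotone (Nat.zero_le n)
      have h2 : μ n ≤ x := hn
      linarith
    rw [hNcount, hemp]
    simp
  -- zeta integrals
  set ζ : ℝ := ∫ y in Ioi (0:ℝ), y ^ (γ-1) / (1+y) with hζdef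
  set ζ' : ℝ := ∫ y in Ioi (0:ℝ), y ^ (τ'-1) / (1+y) with hζ'def
  have hζ'nonneg : 0 ≤ ζ' := setIntegral_nonneg measurableSet_Ioi (fun y hy => by
    have hy0 : (0:ℝ) < y := hy
    positivity)
  -- constants for the bound
  set X' := max (max a X₀) 1 with hX'def
  have hX'a : a ≤ X' := le_trans (le_max_left a X₀) (le_max_left _ _)
  have hX'1 : (1:ℝ) ≤ X' := le_max_right _ _
  have hX'X₀ : X₀ ≤ X' := le_trans (le_max_right a X₀) (le_max_left _ _)
  have hX'0 : (0:ℝ) < X' := lt_of_lt_of_le one_pos hX'1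
  set D := c * X' ^ γ + 1 + Ncount X' with hDdef
  have hD0 : 0 ≤ D := by
    have h1 : 0 ≤ c * X' ^ γ := mul_nonneg hc.le (Real.rpow_nonneg hX'0.le _)
    have h2 := hNnonneg X'
    linarith
  -- key pointwise bound
  have hkey : ∀ x : ℝ, a < x → |Ncount x - c * x ^ γ| ≤ (D + 1) + x ^ τ' := by
    intro x hx
    have hx0 : 0 < x := lt_trans ha hx
    have hs1 := (hsandwich x hx.le).1
    have hs2 := (hsandwich x hx.le).2
    have hxτ' : 0 ≤ x ^ τ' := Real.rpow_nonneg hx0.le _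
    have habs : |Ncount x - c * x ^ γ| ≤ |δ x| + 1 := by
      rw [abs_le]
      constructor
      · have := neg_abs_le (δ x); linarith
      · have := le_abs_self (δ x); linarith
    by_cases hxX : x ≤ X'
    · have hδub : δ x ≤ D := by
        have h1 : Ncount x ≤ Ncount X' := hNmono hxX
        have h2 : 0 ≤ c * x ^ γ := mul_nonneg hc.le (Real.rpow_nonneg hx0.le _)
        rw [hDdef]
        have h3 : 0 ≤ c * X' ^ γ := mul_nonneg hc.le (Real.rpow_nonneg hX'0.le _)
        linarith
      have hδlb : -D ≤ δ x := by
        have h1 : c * x ^ γ ≤ c * X' ^ γ :=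
          mul_le_mul_of_nonneg_left (Real.rpow_le_rpow hx0.le hxX hγ.le) hc.le
        have h2 := hNnonneg x
        have h3 := hNnonneg X'
        rw [hDdef]
        linarith
      have : |δ x| ≤ D := abs_le.2 ⟨hδlb, hδub⟩
      linarith
    · push_neg at hxX
      have hx1 : (1:ℝ) ≤ x := le_of_lt (lt_of_le_of_lt hX'1 hxX)
      have hδb := hX₀ x (le_of_lt (lt_of_le_of_lt hX'X₀ hxX))
      have hmonoexp : x ^ τ ≤ x ^ τ' := Real.rpow_le_rpow_of_exponent_le hx1 hττ'
      linarith
  have hmg : ∀ (p u x : ℝ), 0 < u → 0 < x → x ^ p * (u / (x * (x + u))) = x ^ (p-1) * (u / (x + u)) := by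
    intro p u x hu0 hx0
    have hxu : x + u ≠ 0 := by positivity
    rw [Real.rpow_sub_one hx0.ne']
    field_simp
  set K1 : ℝ := ∫ x in Ioc (0:ℝ) a, x ^ (γ-1) with hK1def
  have hquant : ∀ t : ℝ, 0 < t →
      |S t - c * t ^ γ * ζ| ≤ c * K1 +
        ((D+1) * Real.log (1 + t / a) + ζ' * t ^ τ') := by
    intro t ht
    have Ig := (gInt ht ha).1
    have Igval := (gInt ht ha).2
    have Imγ : IntegrableOn (fun x : ℝ => x ^ (γ-1) * (t/(x+t))) (Ioi (0:ℝ)) volume :=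
      mInt hγ hγ1 ht
    have Imτ' : IntegrableOn (fun x : ℝ => x ^ (τ'-1) * (t/(x+t))) (Ioi (0:ℝ)) volume :=
      mInt hτ'0 hτ'1 ht
    have hIoisub : Ioi a ⊆ Ioi (0:ℝ) := Ioi_subset_Ioi ha.le
    have Imγa : IntegrableOn (fun x : ℝ => x ^ (γ-1) * (t/(x+t))) (Ioi a) volume :=
      Imγ.mono_set hIoisub
    have Imτ'a : IntegrableOn (fun x : ℝ => x ^ (τ'-1) * (t/(x+t))) (Ioi a) volume :=
      Imτ'.mono_set hIoisub
    have Imγc : IntegrableOn (fun x : ℝ => x ^ (γ-1) * (t/(x+t))) (Ioc (0:ℝ) a) volume :=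
      Imγ.mono_set Ioc_subset_Ioi_self
    have gmeas : Measurable (fun x : ℝ => t/(x*(x+t))) :=
      measurable_const.div ((measurable_id.mul (measurable_id.add_const t)))
    have hgnn : ∀ x : ℝ, 0 < x → 0 ≤ t/(x*(x+t)) := by
      intro x hx0
      have : 0 < x * (x+t) := mul_pos hx0 (by linarith)
      positivity
    have Ndom : IntegrableOn (fun x => Ncount x * (t/(x*(x+t)))) (Ioi a) volume := by
      have hDom : IntegrableOn (fun x : ℝ => c * (x ^ (γ-1) * (t/(x+t))) +
          ((D+1) * (t/(x*(x+t))) + x ^ (τ'-1) * (t/(x+t)))) (Ioi a) volume :=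
        (Imγa.const_mul c).add ((Ig.const_mul (D+1)).add Imτ'a)
      refine Integrable.mono hDom ((hNmeas.mul gmeas).aestronglyMeasurable) ?_
      rw [ae_restrict_iff' measurableSet_Ioi]
      filter_upwards with x hx
      have hx0 : 0 < x := lt_trans ha hx
      have hxt : 0 < x + t := by linarith
      have hg0 := hgnn x hx0
      have hk := hkey x hx
      have hub : Ncount x ≤ c * x ^ γ + ((D+1) + x ^ τ') := by
        have := (abs_le.1 hk).2
        linarith
      have hd0 : 0 ≤ c * (x ^ (γ-1) * (t/(x+t))) +
          ((D+1) * (t/(x*(x+t))) + x ^ (τ'-1) * (t/(x+t))) := by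
        have h1 : 0 ≤ x ^ (γ-1) * (t/(x+t)) :=
          mul_nonneg (Real.rpow_nonneg hx0.le _) (div_nonneg ht.le hxt.le)
        have h2 : 0 ≤ x ^ (τ'-1) * (t/(x+t)) :=
          mul_nonneg (Real.rpow_nonneg hx0.le _) (div_nonneg ht.le hxt.le)
        have h3 : 0 ≤ (D+1) * (t/(x*(x+t))) := mul_nonneg (by linarith) hg0
        have h4 : 0 ≤ c * (x ^ (γ-1) * (t/(x+t))) := mul_nonneg hc.le h1
        linarith
      rw [Real.norm_eq_abs, Real.norm_eq_abs,
        abs_of_nonneg (mul_nonneg (hNnonneg x) hg0), abs_of_nonneg hd0]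
      have hRHS : c * (x ^ (γ-1) * (t/(x+t))) +
          ((D+1) * (t/(x*(x+t))) + x ^ (τ'-1) * (t/(x+t)))
          = (c * x ^ γ + ((D+1) + x ^ τ')) * (t/(x*(x+t))) := by
        rw [← hmg γ t x ht hx0, ← hmg τ' t x ht hx0]
        ring
      rw [hRHS]
      exact mul_le_mul_of_nonneg_right hub hg0
    have hsplit : (∫ x in Ioi (0:ℝ), x ^ (γ-1)*(t/(x+t))) =
        (∫ x in Ioc (0:ℝ) a, x ^ (γ-1)*(t/(x+t))) + ∫ x in Ioi a, x ^ (γ-1)*(t/(x+t)) := by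
      rw [← setIntegral_union (Ioc_disjoint_Ioi le_rfl) measurableSet_Ioi Imγc Imγa,
        Ioc_union_Ioi_eq_Ioi ha.le]
    have hSub : S t - c * t ^ γ * ζ =
        (∫ x in Ioi a, (Ncount x * (t/(x*(x+t))) - c * (x ^ (γ-1)*(t/(x+t))))) -
          c * ∫ x in Ioc (0:ℝ) a, x ^ (γ-1)*(t/(x+t)) := by
      rw [hrep t ht]
      have hms : c * t ^ γ * ζ = c * ∫ x in Ioi (0:ℝ), x ^ (γ-1)*(t/(x+t)) := by
        rw [mSubst hγ ht, ← hζdef]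
        ring
      rw [hms, hsplit, integral_sub Ndom (Imγa.const_mul c), integral_const_mul]
      ring
    have hmid : |∫ x in Ioi a, (Ncount x * (t/(x*(x+t))) - c * (x ^ (γ-1)*(t/(x+t))))| ≤
        (D+1) * Real.log (1 + t/a) + ζ' * t ^ τ' := by
      have hdomInt : Integrable (fun x : ℝ => (D+1) * (t/(x*(x+t))) + x ^ (τ'-1)*(t/(x+t)))
          (volume.restrict (Ioi a)) := (Ig.const_mul (D+1)).add Imτ'a
      have hb : ‖∫ x in Ioi a, (Ncount x * (t/(x*(x+t))) - c * (x ^ (γ-1)*(t/(x+t))))‖ ≤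
          ∫ x in Ioi a, ((D+1) * (t/(x*(x+t))) + x ^ (τ'-1)*(t/(x+t))) := by
        refine norm_integral_le_of_norm_le hdomInt ?_
        rw [ae_restrict_iff' measurableSet_Ioi]
        filter_upwards with x hx
        have hx0 : 0 < x := lt_trans ha hx
        have hg0 := hgnn x hx0
        have hk := hkey x hx
        have he : Ncount x * (t/(x*(x+t))) - c * (x ^ (γ-1)*(t/(x+t))) =
            (Ncount x - c * x ^ γ) * (t/(x*(x+t))) := by
          rw [← hmg γ t x ht hx0]
          ring
        rw [Real.norm_eq_abs, he, abs_mul, abs_of_nonneg hg0]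
        calc |Ncount x - c * x ^ γ| * (t/(x*(x+t)))
            ≤ ((D+1) + x ^ τ') * (t/(x*(x+t))) := mul_le_mul_of_nonneg_right hk hg0
          _ = (D+1) * (t/(x*(x+t))) + x ^ (τ'-1)*(t/(x+t)) := by
              rw [← hmg τ' t x ht hx0]
              ring
      have hval : (∫ x in Ioi a, ((D+1) * (t/(x*(x+t))) + x ^ (τ'-1)*(t/(x+t)))) =
          (D+1) * Real.log (1 + t/a) + ∫ x in Ioi a, x ^ (τ'-1)*(t/(x+t)) := by
        rw [integral_add (Ig.const_mul (D+1)) Imτ'a, integral_const_mul, Igval]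
      have htail : (∫ x in Ioi a, x ^ (τ'-1)*(t/(x+t))) ≤ ζ' * t ^ τ' := by
        have h1 : (∫ x in Ioi a, x ^ (τ'-1)*(t/(x+t))) ≤
            ∫ x in Ioi (0:ℝ), x ^ (τ'-1)*(t/(x+t)) := by
          refine setIntegral_mono_set Imτ' ?_ (HasSubset.Subset.eventuallyLE hIoisub)
          rw [EventuallyLE, ae_restrict_iff' measurableSet_Ioi]
          filter_upwards with x hx
          have hx0 : (0:ℝ) < x := hx
          have hxt : 0 < x + t := by linarith
          exact mul_nonneg (Real.rpow_nonneg hx0.le _) (div_nonneg ht.le hxt.le)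
        rw [mSubst hτ'0 ht, ← hζ'def] at h1
        exact h1.trans_eq (mul_comm _ _)
      rw [Real.norm_eq_abs] at hb
      rw [hval] at hb
      linarith
    have hcorner : |∫ x in Ioc (0:ℝ) a, x ^ (γ-1)*(t/(x+t))| ≤ K1 := by
      have hK1int : IntegrableOn (fun x : ℝ => x ^ (γ-1)) (Ioc (0:ℝ) a) volume := by
        rw [integrableOn_Ioc_iff_integrableOn_Ioo]
        exact (intervalIntegral.integrableOn_Ioo_rpow_iff ha).2 (by linarith)
      rw [show K1 = ∫ x in Ioc (0:ℝ) a, x ^ (γ-1) from hK1def, ← Real.norm_eq_abs]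
      refine norm_integral_le_of_norm_le hK1int ?_
      rw [ae_restrict_iff' measurableSet_Ioc]
      filter_upwards with x hx
      have hx0 : 0 < x := hx.1
      have hxt : 0 < x + t := by linarith
      have h1 : 0 ≤ x ^ (γ-1) * (t/(x+t)) :=
        mul_nonneg (Real.rpow_nonneg hx0.le _) (div_nonneg ht.le hxt.le)
      rw [Real.norm_eq_abs, abs_of_nonneg h1]
      calc x ^ (γ-1) * (t/(x+t)) ≤ x ^ (γ-1) * 1 := by
            refine mul_le_mul_of_nonneg_left ?_ (Real.rpow_nonneg hx0.le _)
            rw [div_le_one hxt]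
            linarith
        _ = x ^ (γ-1) := mul_one _
    rw [hSub]
    have habs2 : |(∫ x in Ioi a, (Ncount x * (t/(x*(x+t))) - c * (x ^ (γ-1)*(t/(x+t))))) -
        c * ∫ x in Ioc (0:ℝ) a, x ^ (γ-1)*(t/(x+t))| ≤
        |∫ x in Ioi a, (Ncount x * (t/(x*(x+t))) - c * (x ^ (γ-1)*(t/(x+t))))| +
        |c * ∫ x in Ioc (0:ℝ) a, x ^ (γ-1)*(t/(x+t))| := abs_sub _ _
    have hc2 : |c * ∫ x in Ioc (0:ℝ) a, x ^ (γ-1)*(t/(x+t))| ≤ c * K1 := by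
      rw [abs_mul, abs_of_nonneg hc.le]
      exact mul_le_mul_of_nonneg_left hcorner hc.le
    linarith
  have hO : (fun t : ℝ => S t - c * t ^ γ * ζ) =o[atTop] fun t : ℝ => t ^ γ := by
    have hbig : (fun t : ℝ => S t - c * t ^ γ * ζ) =O[atTop]
        fun t => c * K1 + ((D+1) * Real.log (1 + t / a) + ζ' * t ^ τ') := by
      rw [isBigO_iff]
      refine ⟨1, ?_⟩
      filter_upwards [eventually_gt_atTop (0:ℝ)] with t ht
      rw [one_mul, Real.norm_eq_abs, Real.norm_eq_abs]
      exact le_trans (hquant t ht) (le_abs_self _)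
    refine hbig.trans_isLittleO ?_
    have h1 : (fun _ : ℝ => c * K1) =o[atTop] fun t : ℝ => t ^ γ := by
      refine isLittleO_const_left.2 (Or.inr ?_)
      have h := tendsto_rpow_atTop hγ
      exact tendsto_abs_atTop_atTop.comp h
    have h2 : (fun t : ℝ => (D+1) * Real.log (1 + t / a)) =o[atTop] fun t : ℝ => t ^ γ := by
      refine IsLittleO.const_mul_left ?_ _
      have hcomp : Tendsto (fun t : ℝ => 1 + t / a) atTop atTop :=
        tendsto_atTop_add_const_left atTop 1 (tendsto_id.atTop_div_const ha)
      have h3 := (isLittleO_log_rpow_atTop hγ).comp_tendsto hcomp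
      refine IsLittleO.trans_isBigO h3 ?_
      rw [isBigO_iff]
      refine ⟨(1 + 1/a) ^ γ, ?_⟩
      filter_upwards [eventually_ge_atTop (1:ℝ)] with t ht1
      have ht0 : (0:ℝ) < t := lt_of_lt_of_le one_pos ht1
      have hb : 1 + t / a ≤ (1 + 1/a) * t := by
        have he : (1 + 1/a) * t = t + t / a := by ring
        rw [he]
        linarith
      have hnn : (0:ℝ) ≤ 1 + t / a := by positivity
      simp only [Function.comp_apply]
      rw [Real.norm_eq_abs, Real.norm_eq_abs,
        abs_of_nonneg (Real.rpow_nonneg hnn _), abs_of_nonneg (Real.rpow_nonneg ht0.le _)]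
      calc (1 + t/a) ^ γ ≤ ((1 + 1/a) * t) ^ γ := Real.rpow_le_rpow hnn hb hγ.le
        _ = (1 + 1/a) ^ γ * t ^ γ := Real.mul_rpow (by positivity) ht0.le
    have h3 : (fun t : ℝ => ζ' * t ^ τ') =o[atTop] fun t : ℝ => t ^ γ := by
      refine IsLittleO.const_mul_left ?_ _
      rw [isLittleO_iff_tendsto' ?_]
      · have heq : ∀ᶠ t : ℝ in atTop, t ^ (τ' - γ) = t ^ τ' / t ^ γ := by
          filter_upwards [eventually_gt_atTop (0:ℝ)] with t ht
          rw [← Real.rpow_sub ht]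
        have hneg := tendsto_rpow_neg_atTop (by linarith : 0 < γ - τ')
        rw [show -(γ - τ') = τ' - γ by ring] at hneg
        exact Tendsto.congr' heq hneg
      · filter_upwards [eventually_gt_atTop (0:ℝ)] with t ht h
        exact absurd h (ne_of_gt (Real.rpow_pos_of_pos ht _))
    refine ((h1.add h2).add h3).congr' (Filter.Eventually.of_forall fun t => by ring)
      (Filter.Eventually.of_forall fun t => rfl)
  have hζeq : (∫ y in Ioi (0:ℝ), 1 / (y ^ (1 - γ) * (1 + y))) = ζ := by
    rw [hζdef]
    refine setIntegral_congr_fun measurableSet_Ioi fun y hy => ?_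
    have hy0 : (0:ℝ) < y := hy
    rw [show γ - 1 = -(1 - γ) by ring, Real.rpow_neg hy0.le, one_div, mul_inv,
      div_eq_mul_inv]
  have hfinal := hO.comp_tendsto hμtop
  refine hfinal.congr' (Filter.Eventually.of_forall fun n => ?_)
    (Filter.Eventually.of_forall fun n => rfl)
  simp only [Function.comp_apply]
  rw [hlogprod n, hζeq]
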